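/- (Sensitivity decomposition under violation of monotonicity, after Angrist and Imbens.) Do NOT assume monotonicity. Assume unconfoundedness and positivity, that P(A1 > A0) > 0 and P(A1 < A0) > 0, and that Δ0 := E[ℓ1(X) − ℓ0(X)] ≠ 0. Let χ0 := Γ0/Δ0 with Γ0 := E[m1(X) − m0(X)], let δ1 := P(A1 < A0) and δ2 := E[Y1 − Y0 | A1 < A0] − E[Y1 − Y0 | A1 > A0]. Then E[Y1 − Y0 | A1 > A0] = χ0 + δ1·δ2/Δ0. -/

import Mathlib

open MeasureTheory ProbabilityTheory

lemma integrable_of_bdd {Ω : Type*} [MeasurableSpace Ω] {P : Measure Ω} [IsFiniteMeasure P]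
    {f : Ω → ℝ} (hf : Measurable f) {C : ℝ} (h : ∀ ω, |f ω| ≤ C) : Integrable f P :=
  (integrable_const C).mono' hf.aestronglyMeasurable (ae_of_all _ (by simpa using h))

lemma trunc_abs_le (n : ℕ) (t : ℝ) : |max (-(n:ℝ)) (min t n)| ≤ |t| := by
  rw [abs_le]
  constructor
  · exact le_max_of_le_right (le_min (neg_abs_le t)
      (le_trans (neg_nonpos.mpr (abs_nonneg t)) (Nat.cast_nonneg n)))
  · exact max_le (le_trans (neg_nonpos.mpr (Nat.cast_nonneg n)) (abs_nonneg t))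
      (le_trans (min_le_left _ _) (le_abs_self t))

lemma trunc_eq_self (n : ℕ) (t : ℝ) (h : |t| ≤ n) : max (-(n:ℝ)) (min t n) = t := by
  rw [abs_le] at h
  rw [min_eq_left h.2, max_eq_right h.1]

lemma key_lemma {Ω : Type*} [MeasurableSpace Ω] (P : Measure Ω) [IsProbabilityMeasure P]
    {S : Type*} [mS : MeasurableSpace S]
    (X : Ω → S) (hX : Measurable X)
    (W : Ω → ℝ) (hW : Measurable W) (hW01 : ∀ ω, 0 ≤ W ω ∧ W ω ≤ 1)
    (w : S → ℝ) (hw : Measurable w) (ε : ℝ) (hε : 0 < ε)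
    (hwb : ∀ x, ε ≤ w x ∧ w x ≤ 1)
    (hVw : ∀ g : S → ℝ, Measurable g → (∃ C, ∀ x, |g x| ≤ C) →
      ∫ ω, W ω * g (X ω) ∂P = ∫ ω, w (X ω) * g (X ω) ∂P)
    (T : Ω → ℝ) (hT : Measurable T) (C : ℝ) (hC0 : 0 ≤ C) (hTb : ∀ ω, |T ω| ≤ C)
    (l : S → ℝ) (hl : Measurable l)
    (H1 : ∀ g : S → ℝ, Measurable g → (∃ C, ∀ x, |g x| ≤ C) →
      ∫ ω, T ω * W ω * g (X ω) ∂P = ∫ ω, l (X ω) * W ω * g (X ω) ∂P) :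
    Integrable (fun ω => l (X ω)) P ∧
    ∀ B : Ω → ℝ, Measurable B → (∃ D, ∀ ω, |B ω| ≤ D) →
      (∀ ω, T ω * W ω = B ω * W ω) →
      (∀ g : S → ℝ, Measurable g → (∃ D, ∀ x, |g x| ≤ D) →
        ∫ ω, W ω * (B ω * g (X ω)) ∂P = ∫ ω, w (X ω) * (B ω * g (X ω)) ∂P) →
      ∫ ω, l (X ω) ∂P = ∫ ω, B ω ∂P := by
  have hwpos : ∀ x, 0 < w x := fun x => lt_of_lt_of_le hε (hwb x).1
  -- truncations
  set k : ℕ → S → ℝ := fun n x => |l x| * (if |l x| ≤ n then 1 else 0) with hk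
  have hkmeas : ∀ n, Measurable (k n) := by
    intro n
    exact hl.abs.mul (Measurable.ite (measurableSet_le hl.abs measurable_const)
      measurable_const measurable_const)
  have hkbd : ∀ n : ℕ, ∀ x, |k n x| ≤ n := by
    intro n x
    by_cases h : |l x| ≤ n <;> simp [hk, h, abs_abs, abs_of_nonneg, abs_nonneg]
  have hknn : ∀ n x, 0 ≤ k n x := by
    intro n x
    by_cases h : |l x| ≤ n <;> simp [hk, h, abs_nonneg]
  -- bound on ∫ W * k n (X)
  have hWk_int : ∀ n : ℕ, Integrable (fun ω => W ω * k n (X ω)) P := by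
    intro n
    apply integrable_of_bdd (hW.mul ((hkmeas n).comp hX)) (C := n)
    intro ω
    have h1 := (hW01 ω).1; have h2 := (hW01 ω).2
    calc |W ω * k n (X ω)| = |W ω| * |k n (X ω)| := abs_mul _ _
      _ ≤ 1 * n := by
          apply mul_le_mul (by rw [abs_of_nonneg h1]; exact h2) (hkbd n _) (abs_nonneg _)
          norm_num
      _ = n := one_mul _
  have hbound : ∀ n : ℕ, ∫ ω, W ω * k n (X ω) ∂P ≤ C := by
    intro n
    set g : S → ℝ := fun x => (if 0 ≤ l x then 1 else -1) * (if |l x| ≤ n then 1 else 0) with hg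
    have hgmeas : Measurable g := by
      exact (Measurable.ite (measurableSet_le measurable_const hl) measurable_const
        measurable_const).mul (Measurable.ite (measurableSet_le hl.abs measurable_const)
        measurable_const measurable_const)
    have hgbd : ∀ x, |g x| ≤ 1 := by
      intro x
      by_cases h1 : 0 ≤ l x <;> by_cases h2 : |l x| ≤ n <;> simp [hg, h1, h2]
    have hlg : ∀ x, l x * g x = k n x := by
      intro x
      by_cases h2 : |l x| ≤ n
      · by_cases h1 : 0 ≤ l x
        · simp [hg, hk, h1, h2, abs_of_nonneg h1]
        · simp [hg, hk, h1, h2, abs_of_neg (lt_of_not_ge h1)]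
          try ring
      · simp [hg, hk, h2]
    have e1 : ∀ ω, W ω * k n (X ω) = l (X ω) * W ω * g (X ω) := by
      intro ω; rw [← hlg (X ω)]; ring
    simp only [e1]
    rw [← H1 g hgmeas ⟨1, hgbd⟩]
    have hnorm : ‖∫ ω, T ω * W ω * g (X ω) ∂P‖ ≤ C := by
      have := norm_integral_le_of_norm_le_const (μ := P)
        (f := fun ω => T ω * W ω * g (X ω)) (C := C) (ae_of_all _ ?_)
      · simpa using this
      · intro ω
        have h1 := (hW01 ω).1; have h2 := (hW01 ω).2
        calc ‖T ω * W ω * g (X ω)‖ = |T ω| * |W ω| * |g (X ω)| := by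
              simp [Real.norm_eq_abs, abs_mul]
          _ ≤ C * 1 * 1 := by
              apply mul_le_mul _ (hgbd _) (abs_nonneg _) (by positivity)
              apply mul_le_mul (hTb ω) (by rw [abs_of_nonneg h1]; exact h2) (abs_nonneg _) hC0
          _ = C := by ring
    calc ∫ ω, T ω * W ω * g (X ω) ∂P ≤ ‖∫ ω, T ω * W ω * g (X ω) ∂P‖ := le_abs_self _
      _ ≤ C := hnorm
  -- lintegral bounds via MCT
  have hmono : ∀ (V : Ω → ℝ), (∀ ω, 0 ≤ V ω) →
      Monotone (fun (n : ℕ) (ω : Ω) => ENNReal.ofReal (V ω * k n (X ω))) := by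
    intro V hV n m hnm ω
    apply ENNReal.ofReal_le_ofReal
    apply mul_le_mul_of_nonneg_left _ (hV ω)
    by_cases h : |l (X ω)| ≤ n
    · have h' : |l (X ω)| ≤ m := le_trans h (by exact_mod_cast hnm)
      simp [hk, h, h']
    · by_cases h' : |l (X ω)| ≤ m <;> simp [hk, h, h', abs_nonneg]
  have hsup : ∀ (V : Ω → ℝ), (∀ ω, 0 ≤ V ω) → ∀ ω,
      (⨆ n : ℕ, ENNReal.ofReal (V ω * k n (X ω))) = ENNReal.ofReal (V ω * |l (X ω)|) := by
    intro V hV ω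
    apply le_antisymm
    · apply iSup_le; intro n
      apply ENNReal.ofReal_le_ofReal
      apply mul_le_mul_of_nonneg_left _ (hV ω)
      by_cases h : |l (X ω)| ≤ n <;> simp [hk, h, abs_nonneg]
    · refine le_iSup_of_le ⌈|l (X ω)|⌉₊ ?_
      have h : |l (X ω)| ≤ (⌈|l (X ω)|⌉₊ : ℝ) := Nat.le_ceil _
      simp [hk, h]
  have hMCT : ∀ (V : Ω → ℝ), Measurable V → (∀ ω, 0 ≤ V ω) →
      ∫⁻ ω, ENNReal.ofReal (V ω * |l (X ω)|) ∂P
        = ⨆ n : ℕ, ∫⁻ ω, ENNReal.ofReal (V ω * k n (X ω)) ∂P := by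
    intro V hVm hV
    rw [← lintegral_iSup (f := fun n ω => ENNReal.ofReal (V ω * k n (X ω)))
      (fun n => (hVm.mul ((hkmeas n).comp hX)).ennreal_ofReal) (hmono V hV)]
    apply lintegral_congr; intro ω
    exact (hsup V hV ω).symm
  have hwk_int : ∀ n : ℕ, Integrable (fun ω => w (X ω) * k n (X ω)) P := by
    intro n
    apply integrable_of_bdd ((hw.comp hX).mul ((hkmeas n).comp hX)) (C := n)
    intro ω
    calc |w (X ω) * k n (X ω)| = |w (X ω)| * |k n (X ω)| := abs_mul _ _
      _ ≤ 1 * n := by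
          apply mul_le_mul _ (hkbd n _) (abs_nonneg _) (by norm_num)
          rw [abs_of_nonneg (hwpos _).le]; exact (hwb _).2
      _ = n := one_mul _
  have hwbnd : ∫⁻ ω, ENNReal.ofReal (w (X ω) * |l (X ω)|) ∂P ≤ ENNReal.ofReal C := by
    rw [hMCT (fun ω => w (X ω)) (hw.comp hX) (fun ω => (hwpos _).le)]
    apply iSup_le; intro n
    have hnn : 0 ≤ᵐ[P] fun ω => w (X ω) * k n (X ω) :=
      ae_of_all _ (fun ω => mul_nonneg (hwpos _).le (hknn n _))
    rw [← ofReal_integral_eq_lintegral_ofReal (hwk_int n) hnn]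
    apply ENNReal.ofReal_le_ofReal
    rw [← hVw (k n) (hkmeas n) ⟨n, hkbd n⟩]
    exact hbound n
  -- integrability of l ∘ X
  have hlint : Integrable (fun ω => l (X ω)) P := by
    refine ⟨(hl.comp hX).aestronglyMeasurable, ?_⟩
    have h1 : ∫⁻ ω, ENNReal.ofReal (ε * |l (X ω)|) ∂P ≤ ENNReal.ofReal C := by
      refine le_trans (lintegral_mono (fun ω => ?_)) hwbnd
      exact ENNReal.ofReal_le_ofReal (mul_le_mul_of_nonneg_right (hwb _).1 (abs_nonneg _))
    have h2 : ∫⁻ ω, ENNReal.ofReal (ε * |l (X ω)|) ∂P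
        = ENNReal.ofReal ε * ∫⁻ ω, ENNReal.ofReal (|l (X ω)|) ∂P := by
      rw [← lintegral_const_mul (r := ENNReal.ofReal ε)
        (f := fun ω => ENNReal.ofReal |l (X ω)|) (hl.comp hX).abs.ennreal_ofReal]
      apply lintegral_congr; intro ω
      rw [ENNReal.ofReal_mul hε.le]
    have h3 : ∫⁻ ω, ENNReal.ofReal (|l (X ω)|) ∂P < ⊤ := by
      by_contra h
      push_neg at h
      rw [top_le_iff] at h
      rw [h, ENNReal.mul_top (by simp [hε])] at h2
      rw [h2] at h1
      simp at h1
    simpa [HasFiniteIntegral, ← ofReal_norm_eq_enorm, Real.norm_eq_abs] using h3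
  refine ⟨hlint, ?_⟩
  -- step B : transfer W to w against l
  have stepB : ∀ g : S → ℝ, Measurable g → (∃ D, ∀ x, |g x| ≤ D) →
      ∫ ω, l (X ω) * W ω * g (X ω) ∂P = ∫ ω, l (X ω) * w (X ω) * g (X ω) ∂P := by
    rintro g hg ⟨D0, hD0⟩
    set D := max D0 0 with hDdef
    have hD : ∀ x, |g x| ≤ D := fun x => le_trans (hD0 x) (le_max_left _ _)
    have hDnn : (0:ℝ) ≤ D := le_max_right _ _
    set tr : ℕ → ℝ → ℝ := fun n t => max (-(n:ℝ)) (min t n) with htr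
    have htrm : ∀ n : ℕ, Measurable (fun ω => tr n (l (X ω))) := fun n =>
      measurable_const.max ((hl.comp hX).min measurable_const)
    have key_n : ∀ n : ℕ, ∫ ω, W ω * (tr n (l (X ω)) * g (X ω)) ∂P
        = ∫ ω, w (X ω) * (tr n (l (X ω)) * g (X ω)) ∂P := by
      intro n
      exact hVw (fun x => tr n (l x) * g x)
        ((measurable_const.max (hl.min measurable_const)).mul hg)
        ⟨n * D, fun x => by
          rw [abs_mul]
          apply mul_le_mul _ (hD x) (abs_nonneg _) (Nat.cast_nonneg n)
          calc |tr n (l x)| ≤ |max (-(n:ℝ)) (min (l x) n)| := le_of_eq rfl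
            _ ≤ (n:ℝ) := by
                rw [abs_le]
                refine ⟨le_max_left _ _, max_le (le_trans (neg_nonpos.mpr (Nat.cast_nonneg n))
                  (Nat.cast_nonneg n)) (min_le_right _ _)⟩⟩
    have hbd_int : Integrable (fun ω => |l (X ω)| * D) P := hlint.abs.mul_const D
    have hlim : ∀ (V : Ω → ℝ), Measurable V → (∀ ω, 0 ≤ V ω ∧ V ω ≤ 1) →
        Filter.Tendsto (fun n : ℕ => ∫ ω, V ω * (tr n (l (X ω)) * g (X ω)) ∂P)
          Filter.atTop (nhds (∫ ω, V ω * (l (X ω) * g (X ω)) ∂P)) := by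
      intro V hVm hV
      apply tendsto_integral_of_dominated_convergence (fun ω => |l (X ω)| * D)
      · intro n
        exact (hVm.mul ((htrm n).mul (hg.comp hX))).aestronglyMeasurable
      · exact hbd_int
      · intro n
        apply ae_of_all; intro ω
        calc ‖V ω * (tr n (l (X ω)) * g (X ω))‖
            = |V ω| * (|tr n (l (X ω))| * |g (X ω)|) := by
              simp [Real.norm_eq_abs, abs_mul]
          _ ≤ 1 * (|l (X ω)| * D) := by
              apply mul_le_mul (by rw [abs_of_nonneg (hV ω).1]; exact (hV ω).2)
                (mul_le_mul (trunc_abs_le n _) (hD _) (abs_nonneg _) (abs_nonneg _))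
                (by positivity) (by norm_num)
          _ = |l (X ω)| * D := one_mul _
      · apply ae_of_all; intro ω
        apply tendsto_atTop_of_eventually_const (i₀ := ⌈|l (X ω)|⌉₊)
        intro n hn
        have : |l (X ω)| ≤ (n : ℝ) := le_trans (Nat.le_ceil _) (by exact_mod_cast hn)
        rw [show tr n (l (X ω)) = l (X ω) from trunc_eq_self n _ this]
    have lim1 := hlim W hW hW01
    have lim2 := hlim (fun ω => w (X ω)) (hw.comp hX)
      (fun ω => ⟨(hwpos _).le, (hwb _).2⟩)
    have heq : ∫ ω, W ω * (l (X ω) * g (X ω)) ∂P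
        = ∫ ω, w (X ω) * (l (X ω) * g (X ω)) ∂P := by
      apply tendsto_nhds_unique _ lim2
      rw [show (fun n : ℕ => ∫ ω, w (X ω) * (tr n (l (X ω)) * g (X ω)) ∂P)
        = fun n : ℕ => ∫ ω, W ω * (tr n (l (X ω)) * g (X ω)) ∂P from
        funext fun n => (key_n n).symm]
      exact lim1
    calc ∫ ω, l (X ω) * W ω * g (X ω) ∂P = ∫ ω, W ω * (l (X ω) * g (X ω)) ∂P := by
          apply integral_congr_ae; apply ae_of_all; intro ω
          show l (X ω) * W ω * g (X ω) = W ω * (l (X ω) * g (X ω)); ring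
      _ = ∫ ω, w (X ω) * (l (X ω) * g (X ω)) ∂P := heq
      _ = ∫ ω, l (X ω) * w (X ω) * g (X ω) ∂P := by
          apply integral_congr_ae; apply ae_of_all; intro ω
          show w (X ω) * (l (X ω) * g (X ω)) = l (X ω) * w (X ω) * g (X ω); ring
  -- conclusion
  rintro B hB ⟨D, hDb⟩ hTW hU
  set winv : S → ℝ := fun x => (w x)⁻¹ with hwinv
  have hwinvm : Measurable winv := hw.inv
  have hwinvb : ∀ x, |winv x| ≤ ε⁻¹ := by
    intro x
    rw [hwinv, abs_of_nonneg (inv_nonneg.mpr (hwpos x).le)]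
    exact inv_anti₀ hε (hwb x).1
  calc ∫ ω, l (X ω) ∂P = ∫ ω, l (X ω) * w (X ω) * winv (X ω) ∂P := by
        apply integral_congr_ae; apply ae_of_all; intro ω
        show l (X ω) = l (X ω) * w (X ω) * winv (X ω)
        rw [hwinv, mul_assoc, mul_inv_cancel₀ (hwpos _).ne', mul_one]
    _ = ∫ ω, l (X ω) * W ω * winv (X ω) ∂P := (stepB winv hwinvm ⟨ε⁻¹, hwinvb⟩).symm
    _ = ∫ ω, T ω * W ω * winv (X ω) ∂P := (H1 winv hwinvm ⟨ε⁻¹, hwinvb⟩).symm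
    _ = ∫ ω, W ω * (B ω * winv (X ω)) ∂P := by
        apply integral_congr_ae; apply ae_of_all; intro ω
        show T ω * W ω * winv (X ω) = W ω * (B ω * winv (X ω))
        rw [hTW ω]; ring
    _ = ∫ ω, w (X ω) * (B ω * winv (X ω)) ∂P := hU winv hwinvm ⟨ε⁻¹, hwinvb⟩
    _ = ∫ ω, B ω ∂P := by
        apply integral_congr_ae; apply ae_of_all; intro ω
        show w (X ω) * (B ω * winv (X ω)) = B ω
        rw [hwinv, show w (X ω) * (B ω * (w (X ω))⁻¹) = B ω * (w (X ω) * (w (X ω))⁻¹) by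
          ring, mul_inv_cancel₀ (hwpos _).ne', mul_one]

lemma mul_abs_le' {a b c d : ℝ} (h1 : |a| ≤ c) (h2 : |b| ≤ d) : |a * b| ≤ c * d := by
  rw [abs_mul]
  exact mul_le_mul h1 h2 (abs_nonneg _) (le_trans (abs_nonneg _) h1)

lemma abs_le_one_of_01 {t : ℝ} (h : 0 ≤ t ∧ t ≤ 1) : |t| ≤ 1 := by
  rw [abs_of_nonneg h.1]; exact h.2

/-- sensitivity decomposition under violation of monotonicity: without
monotonicity, with δ1 := P(A1 < A0) and
δ2 := E[Y1 − Y0 | A1 < A0] − E[Y1 − Y0 | A1 > A0],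
E[Y1 − Y0 | A1 > A0] = χ0 + δ1·δ2/Δ0 where χ0 := Γ0/Δ0. -/
theorem stmt_16
    {Ω : Type*} [MeasurableSpace Ω] (P : Measure Ω) [IsProbabilityMeasure P]
    {S : Type*} [mS : MeasurableSpace S]
    (X : Ω → S) (hX : Measurable X)
    (Z A0 A1 Y0 Y1 : Ω → ℝ)
    (hZ : Measurable Z) (hA0 : Measurable A0) (hA1 : Measurable A1)
    (hY0 : Measurable Y0) (hY1 : Measurable Y1)
    (hZ01 : ∀ ω, Z ω = 0 ∨ Z ω = 1)
    (hA0_01 : ∀ ω, A0 ω = 0 ∨ A0 ω = 1)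
    (hA1_01 : ∀ ω, A1 ω = 0 ∨ A1 ω = 1)
    (hY0b : ∃ C, ∀ ω, |Y0 ω| ≤ C) (hY1b : ∃ C, ∀ ω, |Y1 ω| ≤ C)
    (A Y : Ω → ℝ)
    (hA : A = fun ω => (1 - Z ω) * A0 ω + Z ω * A1 ω)
    (hY : Y = fun ω => (1 - A ω) * Y0 ω + A ω * Y1 ω)
    (e : S → ℝ) (he : Measurable e) (ε : ℝ) (hε : 0 < ε) (hε2 : ε < 1/2)
    (hebd : ∀ x, ε ≤ e x ∧ e x ≤ 1 - ε)
    (hVe : ∀ g : S → ℝ, Measurable g → (∃ C, ∀ x, |g x| ≤ C) →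
      ∫ ω, Z ω * g (X ω) ∂P = ∫ ω, e (X ω) * g (X ω) ∂P)
    (hUnconf : ∀ ψ : ℝ × ℝ × ℝ × ℝ → ℝ, Measurable ψ → (∃ C, ∀ v, |ψ v| ≤ C) →
      ∀ g : S → ℝ, Measurable g → (∃ C, ∀ x, |g x| ≤ C) →
      ∫ ω, Z ω * ψ (A0 ω, A1 ω, Y0 ω, Y1 ω) * g (X ω) ∂P
        = ∫ ω, e (X ω) * ψ (A0 ω, A1 ω, Y0 ω, Y1 ω) * g (X ω) ∂P)
    (m0 m1 l0 l1 : S → ℝ)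
    (hm0 : Measurable m0) (hm1 : Measurable m1)
    (hl0 : Measurable l0) (hl1 : Measurable l1)
    (hm0v : ∀ g : S → ℝ, Measurable g → (∃ C, ∀ x, |g x| ≤ C) →
      ∫ ω, Y ω * (if Z ω = 0 then (1:ℝ) else 0) * g (X ω) ∂P
        = ∫ ω, m0 (X ω) * (if Z ω = 0 then (1:ℝ) else 0) * g (X ω) ∂P)
    (hm1v : ∀ g : S → ℝ, Measurable g → (∃ C, ∀ x, |g x| ≤ C) →
      ∫ ω, Y ω * (if Z ω = 1 then (1:ℝ) else 0) * g (X ω) ∂P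
        = ∫ ω, m1 (X ω) * (if Z ω = 1 then (1:ℝ) else 0) * g (X ω) ∂P)
    (hl0v : ∀ g : S → ℝ, Measurable g → (∃ C, ∀ x, |g x| ≤ C) →
      ∫ ω, A ω * (if Z ω = 0 then (1:ℝ) else 0) * g (X ω) ∂P
        = ∫ ω, l0 (X ω) * (if Z ω = 0 then (1:ℝ) else 0) * g (X ω) ∂P)
    (hl1v : ∀ g : S → ℝ, Measurable g → (∃ C, ∀ x, |g x| ≤ C) →
      ∫ ω, A ω * (if Z ω = 1 then (1:ℝ) else 0) * g (X ω) ∂P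
        = ∫ ω, l1 (X ω) * (if Z ω = 1 then (1:ℝ) else 0) * g (X ω) ∂P)
    -- compliers and defiers both present; Δ0 ≠ 0
    (hC : 0 < P {ω | A1 ω = 1 ∧ A0 ω = 0})
    (hD : 0 < P {ω | A1 ω = 0 ∧ A0 ω = 1})
    (Γ0 Δ0 χ0 δ1 δ2 : ℝ)
    (hΓ0 : Γ0 = ∫ ω, m1 (X ω) - m0 (X ω) ∂P)
    (hΔ0 : Δ0 = ∫ ω, l1 (X ω) - l0 (X ω) ∂P)
    (hΔ0ne : Δ0 ≠ 0)
    (hχ0 : χ0 = Γ0 / Δ0)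
    (hδ1 : δ1 = (P {ω | A1 ω = 0 ∧ A0 ω = 1}).toReal)
    (hδ2 : δ2 = (∫ ω in {ω | A1 ω = 0 ∧ A0 ω = 1}, (Y1 ω - Y0 ω) ∂P)
            / (P {ω | A1 ω = 0 ∧ A0 ω = 1}).toReal
          - (∫ ω in {ω | A1 ω = 1 ∧ A0 ω = 0}, (Y1 ω - Y0 ω) ∂P)
            / (P {ω | A1 ω = 1 ∧ A0 ω = 0}).toReal) :
    (∫ ω in {ω | A1 ω = 1 ∧ A0 ω = 0}, (Y1 ω - Y0 ω) ∂P)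
        / (P {ω | A1 ω = 1 ∧ A0 ω = 0}).toReal
      = χ0 + δ1 * δ2 / Δ0 := by
  classical
  obtain ⟨C0, hC0b⟩ := hY0b
  obtain ⟨C1, hC1b⟩ := hY1b
  set Cb : ℝ := max (max C0 C1) 0 with hCb
  have hCb0 : (0:ℝ) ≤ Cb := le_max_right _ _
  have hY0b' : ∀ ω, |Y0 ω| ≤ Cb := fun ω =>
    le_trans (hC0b ω) (le_trans (le_max_left _ _) (le_max_left _ _))
  have hY1b' : ∀ ω, |Y1 ω| ≤ Cb := fun ω =>
    le_trans (hC1b ω) (le_trans (le_max_right _ _) (le_max_left _ _))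
  have hAm : Measurable A := by
    rw [hA]; exact ((measurable_const.sub hZ).mul hA0).add (hZ.mul hA1)
  have hYm : Measurable Y := by
    rw [hY]; exact ((measurable_const.sub hAm).mul hY0).add (hAm.mul hY1)
  have hA01 : ∀ ω, A ω = 0 ∨ A ω = 1 := by
    intro ω; rw [hA]; rcases hZ01 ω with h | h
    · simpa [h] using hA0_01 ω
    · simpa [h] using hA1_01 ω
  have hAb : ∀ ω, |A ω| ≤ 1 := by
    intro ω; rcases hA01 ω with h | h <;> simp [h]
  have hA1b : ∀ ω, |A1 ω| ≤ 1 := by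
    intro ω; rcases hA1_01 ω with h | h <;> simp [h]
  have hA0b : ∀ ω, |A0 ω| ≤ 1 := by
    intro ω; rcases hA0_01 ω with h | h <;> simp [h]
  have hYb : ∀ ω, |Y ω| ≤ Cb := by
    intro ω; rw [hY]; rcases hA01 ω with h | h <;> simp [h]
    · exact hY0b' ω
    · exact hY1b' ω
  have hZ01' : ∀ ω, 0 ≤ Z ω ∧ Z ω ≤ 1 := by
    intro ω; rcases hZ01 ω with h | h <;> simp [h]
  have hW0 : ∀ ω, 0 ≤ 1 - Z ω ∧ 1 - Z ω ≤ 1 := by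
    intro ω; rcases hZ01 ω with h | h <;> simp [h]
  have hebd' : ∀ x, ε ≤ e x ∧ e x ≤ 1 :=
    fun x => ⟨(hebd x).1, le_trans (hebd x).2 (by linarith)⟩
  have hwbd' : ∀ x, ε ≤ 1 - e x ∧ 1 - e x ≤ 1 := by
    intro x
    constructor
    · linarith [(hebd x).2]
    · linarith [(hebd x).1, hε]
  have hiz1 : ∀ ω, (if Z ω = 1 then (1:ℝ) else 0) = Z ω := by
    intro ω; rcases hZ01 ω with h | h <;> simp [h]
  have hiz0 : ∀ ω, (if Z ω = 0 then (1:ℝ) else 0) = 1 - Z ω := by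
    intro ω; rcases hZ01 ω with h | h <;> simp [h]
  -- integrability helpers
  have hbddint : ∀ (f : Ω → ℝ), Measurable f → (∃ D, ∀ ω, |f ω| ≤ D) → Integrable f P := by
    rintro f hf ⟨D, hD⟩
    exact integrable_of_bdd hf hD
  -- version equality for weight 1 - Z
  have hVw0 : ∀ g : S → ℝ, Measurable g → (∃ C, ∀ x, |g x| ≤ C) →
      ∫ ω, (1 - Z ω) * g (X ω) ∂P = ∫ ω, (1 - e (X ω)) * g (X ω) ∂P := by
    rintro g hg ⟨D, hD⟩
    have hgint : Integrable (fun ω => g (X ω)) P := hbddint _ (hg.comp hX) ⟨D, fun ω => hD _⟩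
    have heb1 : ∀ x, |e x| ≤ 1 :=
      fun x => abs_le_one_of_01 ⟨le_trans hε.le (hebd' x).1, (hebd' x).2⟩
    have hZg : Integrable (fun ω => Z ω * g (X ω)) P :=
      hbddint _ (hZ.mul (hg.comp hX)) ⟨1 * max D 0, fun ω =>
        mul_abs_le' (abs_le_one_of_01 (hZ01' ω)) (le_trans (hD _) (le_max_left _ _))⟩
    have heg : Integrable (fun ω => e (X ω) * g (X ω)) P :=
      hbddint _ ((he.comp hX).mul (hg.comp hX)) ⟨1 * max D 0, fun ω =>
        mul_abs_le' (heb1 _) (le_trans (hD _) (le_max_left _ _))⟩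
    calc ∫ ω, (1 - Z ω) * g (X ω) ∂P = ∫ ω, g (X ω) - Z ω * g (X ω) ∂P := by
          apply integral_congr_ae; apply ae_of_all; intro ω
          show (1 - Z ω) * g (X ω) = g (X ω) - Z ω * g (X ω); ring
      _ = ∫ ω, g (X ω) ∂P - ∫ ω, Z ω * g (X ω) ∂P := integral_sub hgint hZg
      _ = ∫ ω, g (X ω) ∂P - ∫ ω, e (X ω) * g (X ω) ∂P := by rw [hVe g hg ⟨D, hD⟩]
      _ = ∫ ω, g (X ω) - e (X ω) * g (X ω) ∂P := (integral_sub hgint heg).symm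
      _ = ∫ ω, (1 - e (X ω)) * g (X ω) ∂P := by
          apply integral_congr_ae; apply ae_of_all; intro ω
          show g (X ω) - e (X ω) * g (X ω) = (1 - e (X ω)) * g (X ω); ring
  -- unconfoundedness reshaped for arbitrary bounded B with representation ψ
  have hUZ : ∀ B : Ω → ℝ, Measurable B → (∃ D, ∀ ω, |B ω| ≤ D) →
      (∃ ψ : ℝ × ℝ × ℝ × ℝ → ℝ, Measurable ψ ∧ (∃ C, ∀ v, |ψ v| ≤ C) ∧
        ∀ ω, ψ (A0 ω, A1 ω, Y0 ω, Y1 ω) = B ω) →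
      ∀ g : S → ℝ, Measurable g → (∃ D, ∀ x, |g x| ≤ D) →
        ∫ ω, Z ω * (B ω * g (X ω)) ∂P = ∫ ω, e (X ω) * (B ω * g (X ω)) ∂P := by
    rintro B hB hBb ⟨ψ, hψm, hψb, hψv⟩ g hg hgb
    have h1 := hUnconf ψ hψm hψb g hg hgb
    calc ∫ ω, Z ω * (B ω * g (X ω)) ∂P
        = ∫ ω, Z ω * ψ (A0 ω, A1 ω, Y0 ω, Y1 ω) * g (X ω) ∂P := by
          apply integral_congr_ae; apply ae_of_all; intro ω
          show Z ω * (B ω * g (X ω)) = Z ω * ψ (A0 ω, A1 ω, Y0 ω, Y1 ω) * g (X ω)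
          rw [hψv ω]; ring
      _ = ∫ ω, e (X ω) * ψ (A0 ω, A1 ω, Y0 ω, Y1 ω) * g (X ω) ∂P := h1
      _ = ∫ ω, e (X ω) * (B ω * g (X ω)) ∂P := by
          apply integral_congr_ae; apply ae_of_all; intro ω
          show e (X ω) * ψ (A0 ω, A1 ω, Y0 ω, Y1 ω) * g (X ω) = e (X ω) * (B ω * g (X ω))
          rw [hψv ω]; ring
  have hUW0 : ∀ B : Ω → ℝ, Measurable B → (∃ D, ∀ ω, |B ω| ≤ D) →
      (∃ ψ : ℝ × ℝ × ℝ × ℝ → ℝ, Measurable ψ ∧ (∃ C, ∀ v, |ψ v| ≤ C) ∧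
        ∀ ω, ψ (A0 ω, A1 ω, Y0 ω, Y1 ω) = B ω) →
      ∀ g : S → ℝ, Measurable g → (∃ D, ∀ x, |g x| ≤ D) →
        ∫ ω, (1 - Z ω) * (B ω * g (X ω)) ∂P = ∫ ω, (1 - e (X ω)) * (B ω * g (X ω)) ∂P := by
    rintro B hB hBb hψ g hg hgb
    obtain ⟨D1, hD1⟩ := hBb
    obtain ⟨D2, hD2⟩ := hgb
    have heb1 : ∀ x, |e x| ≤ 1 :=
      fun x => abs_le_one_of_01 ⟨le_trans hε.le (hebd' x).1, (hebd' x).2⟩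
    have hBgb : ∀ ω, |B ω * g (X ω)| ≤ |D1| * |D2| := fun ω =>
      mul_abs_le' (le_trans (hD1 _) (le_abs_self _)) (le_trans (hD2 _) (le_abs_self _))
    have hBg : Integrable (fun ω => B ω * g (X ω)) P :=
      hbddint _ (hB.mul (hg.comp hX)) ⟨|D1| * |D2|, hBgb⟩
    have hZBg : Integrable (fun ω => Z ω * (B ω * g (X ω))) P :=
      hbddint _ (hZ.mul (hB.mul (hg.comp hX))) ⟨1 * (|D1| * |D2|), fun ω =>
        mul_abs_le' (abs_le_one_of_01 (hZ01' ω)) (hBgb ω)⟩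
    have heBg : Integrable (fun ω => e (X ω) * (B ω * g (X ω))) P :=
      hbddint _ ((he.comp hX).mul (hB.mul (hg.comp hX))) ⟨1 * (|D1| * |D2|), fun ω =>
        mul_abs_le' (heb1 _) (hBgb ω)⟩
    calc ∫ ω, (1 - Z ω) * (B ω * g (X ω)) ∂P
        = ∫ ω, B ω * g (X ω) - Z ω * (B ω * g (X ω)) ∂P := by
          apply integral_congr_ae; apply ae_of_all; intro ω
          show (1 - Z ω) * (B ω * g (X ω)) = B ω * g (X ω) - Z ω * (B ω * g (X ω)); ring
      _ = ∫ ω, B ω * g (X ω) ∂P - ∫ ω, Z ω * (B ω * g (X ω)) ∂P := integral_sub hBg hZBg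
      _ = ∫ ω, B ω * g (X ω) ∂P - ∫ ω, e (X ω) * (B ω * g (X ω)) ∂P := by
          rw [hUZ B hB ⟨D1, hD1⟩ hψ g hg ⟨D2, hD2⟩]
      _ = ∫ ω, B ω * g (X ω) - e (X ω) * (B ω * g (X ω)) ∂P := (integral_sub hBg heBg).symm
      _ = ∫ ω, (1 - e (X ω)) * (B ω * g (X ω)) ∂P := by
          apply integral_congr_ae; apply ae_of_all; intro ω
          show B ω * g (X ω) - e (X ω) * (B ω * g (X ω)) = (1 - e (X ω)) * (B ω * g (X ω)); ring
  -- clamping functions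
  set c01 : ℝ → ℝ := fun t => max 0 (min t 1) with hc01
  have hc01m : Measurable c01 := measurable_const.max (measurable_id.min measurable_const)
  have hc01lb : ∀ t, 0 ≤ c01 t := fun t => le_max_left _ _
  have hc01ub : ∀ t, c01 t ≤ 1 := fun t => max_le zero_le_one (min_le_right _ _)
  have hc01b : ∀ t, |c01 t| ≤ 1 := fun t => abs_le_one_of_01 ⟨hc01lb t, hc01ub t⟩
  have h1mc : ∀ t, |1 - c01 t| ≤ 1 := by
    intro t; rw [abs_le]; constructor <;> [linarith [hc01ub t]; linarith [hc01lb t]]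
  have hc01v : ∀ t : ℝ, (t = 0 ∨ t = 1) → c01 t = t := by
    rintro t (h | h) <;> simp [hc01, h]
  set cC : ℝ → ℝ := fun t => max (-Cb) (min t Cb) with hcC
  have hcCm : Measurable cC := measurable_const.max (measurable_id.min measurable_const)
  have hcCb : ∀ t, |cC t| ≤ Cb := by
    intro t; rw [abs_le]; constructor
    · exact le_max_left _ _
    · exact max_le (by linarith) (min_le_right _ _)
  have hcCv : ∀ t : ℝ, |t| ≤ Cb → cC t = t := by
    intro t h; rw [abs_le] at h
    rw [hcC]; simp only [min_eq_left h.2, max_eq_right h.1]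
  -- instance l1
  have H1l1 : ∀ g : S → ℝ, Measurable g → (∃ C, ∀ x, |g x| ≤ C) →
      ∫ ω, A ω * Z ω * g (X ω) ∂P = ∫ ω, l1 (X ω) * Z ω * g (X ω) ∂P := by
    intro g hg hgb
    have h := hl1v g hg hgb
    simp only [hiz1] at h
    exact h
  have K1 := key_lemma P X hX Z hZ hZ01' e he ε hε hebd' hVe A hAm 1 zero_le_one hAb l1 hl1 H1l1
  have Il1 : Integrable (fun ω => l1 (X ω)) P := K1.1
  have El1 : ∫ ω, l1 (X ω) ∂P = ∫ ω, A1 ω ∂P := by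
    apply K1.2 A1 hA1 ⟨1, hA1b⟩
    · intro ω; rcases hZ01 ω with h | h <;> simp [hA, h]
    · refine hUZ A1 hA1 ⟨1, hA1b⟩ ⟨fun v => c01 v.2.1,
        hc01m.comp (measurable_fst.comp measurable_snd), ⟨1, fun v => hc01b _⟩,
        fun ω => hc01v _ (hA1_01 ω)⟩
  -- instance l0
  have H1l0 : ∀ g : S → ℝ, Measurable g → (∃ C, ∀ x, |g x| ≤ C) →
      ∫ ω, A ω * (1 - Z ω) * g (X ω) ∂P = ∫ ω, l0 (X ω) * (1 - Z ω) * g (X ω) ∂P := by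
    intro g hg hgb
    have h := hl0v g hg hgb
    simp only [hiz0] at h
    exact h
  have K0 := key_lemma P X hX (fun ω => 1 - Z ω) (measurable_const.sub hZ) hW0
    (fun x => 1 - e x) (measurable_const.sub he) ε hε hwbd' hVw0 A hAm 1 zero_le_one hAb
    l0 hl0 H1l0
  have Il0 : Integrable (fun ω => l0 (X ω)) P := K0.1
  have El0 : ∫ ω, l0 (X ω) ∂P = ∫ ω, A0 ω ∂P := by
    apply K0.2 A0 hA0 ⟨1, hA0b⟩
    · intro ω; rcases hZ01 ω with h | h <;> simp [hA, h]
    · refine hUW0 A0 hA0 ⟨1, hA0b⟩ ⟨fun v => c01 v.1,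
        hc01m.comp measurable_fst, ⟨1, fun v => hc01b _⟩,
        fun ω => hc01v _ (hA0_01 ω)⟩
  -- instance m1
  set B1 : Ω → ℝ := fun ω => (1 - A1 ω) * Y0 ω + A1 ω * Y1 ω with hB1def
  set B0 : Ω → ℝ := fun ω => (1 - A0 ω) * Y0 ω + A0 ω * Y1 ω with hB0def
  have hB1m : Measurable B1 := ((measurable_const.sub hA1).mul hY0).add (hA1.mul hY1)
  have hB0m : Measurable B0 := ((measurable_const.sub hA0).mul hY0).add (hA0.mul hY1)
  have hB1b : ∀ ω, |B1 ω| ≤ Cb := by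
    intro ω; rcases hA1_01 ω with h | h <;> simp [hB1def, h]
    · exact hY0b' ω
    · exact hY1b' ω
  have hB0b : ∀ ω, |B0 ω| ≤ Cb := by
    intro ω; rcases hA0_01 ω with h | h <;> simp [hB0def, h]
    · exact hY0b' ω
    · exact hY1b' ω
  have hψ1m : Measurable (fun v : ℝ × ℝ × ℝ × ℝ =>
      (1 - c01 v.2.1) * cC v.2.2.1 + c01 v.2.1 * cC v.2.2.2) := by
    apply Measurable.add
    · exact (measurable_const.sub (hc01m.comp (measurable_fst.comp measurable_snd))).mul
        (hcCm.comp (measurable_fst.comp (measurable_snd.comp measurable_snd)))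
    · exact (hc01m.comp (measurable_fst.comp measurable_snd)).mul
        (hcCm.comp (measurable_snd.comp (measurable_snd.comp measurable_snd)))
  have hψ0m : Measurable (fun v : ℝ × ℝ × ℝ × ℝ =>
      (1 - c01 v.1) * cC v.2.2.1 + c01 v.1 * cC v.2.2.2) := by
    apply Measurable.add
    · exact (measurable_const.sub (hc01m.comp measurable_fst)).mul
        (hcCm.comp (measurable_fst.comp (measurable_snd.comp measurable_snd)))
    · exact (hc01m.comp measurable_fst).mul
        (hcCm.comp (measurable_snd.comp (measurable_snd.comp measurable_snd)))
  have hψbd : ∀ (c y0 y1 : ℝ), |c| ≤ 1 → |1 - c| ≤ 1 →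
      |(1 - c) * cC y0 + c * cC y1| ≤ 1 * Cb + 1 * Cb := by
    intro c y0 y1 h1 h2
    calc |(1 - c) * cC y0 + c * cC y1| ≤ |(1 - c) * cC y0| + |c * cC y1| := abs_add_le _ _
      _ ≤ 1 * Cb + 1 * Cb :=
          add_le_add (mul_abs_le' h2 (hcCb _)) (mul_abs_le' h1 (hcCb _))
  have H1m1 : ∀ g : S → ℝ, Measurable g → (∃ C, ∀ x, |g x| ≤ C) →
      ∫ ω, Y ω * Z ω * g (X ω) ∂P = ∫ ω, m1 (X ω) * Z ω * g (X ω) ∂P := by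
    intro g hg hgb
    have h := hm1v g hg hgb
    simp only [hiz1] at h
    exact h
  have Km1 := key_lemma P X hX Z hZ hZ01' e he ε hε hebd' hVe Y hYm Cb hCb0 hYb m1 hm1 H1m1
  have Im1 : Integrable (fun ω => m1 (X ω)) P := Km1.1
  have Em1 : ∫ ω, m1 (X ω) ∂P = ∫ ω, B1 ω ∂P := by
    apply Km1.2 B1 hB1m ⟨Cb, hB1b⟩
    · intro ω; rcases hZ01 ω with h | h
      · simp [h]
      · simp only [hY, hA, h, hB1def]; ring
    · refine hUZ B1 hB1m ⟨Cb, hB1b⟩ ⟨fun v =>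
        (1 - c01 v.2.1) * cC v.2.2.1 + c01 v.2.1 * cC v.2.2.2, hψ1m,
        ⟨1 * Cb + 1 * Cb, fun v => hψbd _ _ _ (hc01b _) (h1mc _)⟩, ?_⟩
      intro ω
      simp only [hB1def]
      rw [hc01v _ (hA1_01 ω), hcCv _ (hY0b' ω), hcCv _ (hY1b' ω)]
  -- instance m0
  have H1m0 : ∀ g : S → ℝ, Measurable g → (∃ C, ∀ x, |g x| ≤ C) →
      ∫ ω, Y ω * (1 - Z ω) * g (X ω) ∂P = ∫ ω, m0 (X ω) * (1 - Z ω) * g (X ω) ∂P := by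
    intro g hg hgb
    have h := hm0v g hg hgb
    simp only [hiz0] at h
    exact h
  have Km0 := key_lemma P X hX (fun ω => 1 - Z ω) (measurable_const.sub hZ) hW0
    (fun x => 1 - e x) (measurable_const.sub he) ε hε hwbd' hVw0 Y hYm Cb hCb0 hYb m0 hm0 H1m0
  have Im0 : Integrable (fun ω => m0 (X ω)) P := Km0.1
  have Em0 : ∫ ω, m0 (X ω) ∂P = ∫ ω, B0 ω ∂P := by
    apply Km0.2 B0 hB0m ⟨Cb, hB0b⟩
    · intro ω; rcases hZ01 ω with h | h
      · simp only [hY, hA, h, hB0def]; ring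
      · simp [h]
    · refine hUW0 B0 hB0m ⟨Cb, hB0b⟩ ⟨fun v =>
        (1 - c01 v.1) * cC v.2.2.1 + c01 v.1 * cC v.2.2.2, hψ0m,
        ⟨1 * Cb + 1 * Cb, fun v => hψbd _ _ _ (hc01b _) (h1mc _)⟩, ?_⟩
      intro ω
      simp only [hB0def]
      rw [hc01v _ (hA0_01 ω), hcCv _ (hY0b' ω), hcCv _ (hY1b' ω)]
  -- identify Δ0 and Γ0
  set Sc : Set Ω := {ω | A1 ω = 1 ∧ A0 ω = 0} with hScdef
  set Sd : Set Ω := {ω | A1 ω = 0 ∧ A0 ω = 1} with hSddef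
  have hScm : MeasurableSet Sc :=
    (hA1 (measurableSet_singleton 1)).inter (hA0 (measurableSet_singleton 0))
  have hSdm : MeasurableSet Sd :=
    (hA1 (measurableSet_singleton 0)).inter (hA0 (measurableSet_singleton 1))
  have intA1 : Integrable A1 P := hbddint _ hA1 ⟨1, hA1b⟩
  have intA0 : Integrable A0 P := hbddint _ hA0 ⟨1, hA0b⟩
  have intB1 : Integrable B1 P := hbddint _ hB1m ⟨Cb, hB1b⟩
  have intB0 : Integrable B0 P := hbddint _ hB0m ⟨Cb, hB0b⟩
  have hfm : Measurable (fun ω => Y1 ω - Y0 ω) := hY1.sub hY0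
  have hfb : ∀ ω, |Y1 ω - Y0 ω| ≤ Cb + Cb := fun ω =>
    le_trans (abs_sub _ _) (add_le_add (hY1b' ω) (hY0b' ω))
  have intf : Integrable (fun ω => Y1 ω - Y0 ω) P := hbddint _ hfm ⟨Cb + Cb, hfb⟩
  have hptΔ : ∀ ω, A1 ω - A0 ω
      = Sc.indicator (fun _ => (1:ℝ)) ω - Sd.indicator (fun _ => (1:ℝ)) ω := by
    intro ω
    rcases hA1_01 ω with h1 | h1 <;> rcases hA0_01 ω with h0 | h0 <;>
      simp [Set.indicator_apply, hScdef, hSddef, Set.mem_setOf_eq, h1, h0]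
  have hptΓ : ∀ ω, B1 ω - B0 ω
      = Sc.indicator (fun ω => Y1 ω - Y0 ω) ω - Sd.indicator (fun ω => Y1 ω - Y0 ω) ω := by
    intro ω
    rcases hA1_01 ω with h1 | h1 <;> rcases hA0_01 ω with h0 | h0 <;>
      simp [Set.indicator_apply, hB1def, hB0def, hScdef, hSddef, Set.mem_setOf_eq, h1, h0] <;>
      ring
  have hΔval : Δ0 = (P Sc).toReal - (P Sd).toReal := by
    rw [hΔ0, integral_sub Il1 Il0, El1, El0, ← integral_sub intA1 intA0]
    calc ∫ ω, A1 ω - A0 ω ∂P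
        = ∫ ω, Sc.indicator (fun _ => (1:ℝ)) ω - Sd.indicator (fun _ => (1:ℝ)) ω ∂P :=
          integral_congr_ae (ae_of_all _ hptΔ)
      _ = (∫ ω, Sc.indicator (fun _ => (1:ℝ)) ω ∂P)
          - ∫ ω, Sd.indicator (fun _ => (1:ℝ)) ω ∂P :=
          integral_sub ((integrable_const 1).indicator hScm)
            ((integrable_const 1).indicator hSdm)
      _ = (P Sc).toReal - (P Sd).toReal := by
          rw [integral_indicator_const _ hScm, integral_indicator_const _ hSdm]
          simp
          rfl
  have hΓval : Γ0 = (∫ ω in Sc, (Y1 ω - Y0 ω) ∂P) - ∫ ω in Sd, (Y1 ω - Y0 ω) ∂P := by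
    rw [hΓ0, integral_sub Im1 Im0, Em1, Em0, ← integral_sub intB1 intB0]
    calc ∫ ω, B1 ω - B0 ω ∂P
        = ∫ ω, Sc.indicator (fun ω => Y1 ω - Y0 ω) ω
            - Sd.indicator (fun ω => Y1 ω - Y0 ω) ω ∂P :=
          integral_congr_ae (ae_of_all _ hptΓ)
      _ = (∫ ω, Sc.indicator (fun ω => Y1 ω - Y0 ω) ω ∂P)
          - ∫ ω, Sd.indicator (fun ω => Y1 ω - Y0 ω) ω ∂P :=
          integral_sub (intf.indicator hScm) (intf.indicator hSdm)
      _ = (∫ ω in Sc, (Y1 ω - Y0 ω) ∂P) - ∫ ω in Sd, (Y1 ω - Y0 ω) ∂P := by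
          rw [integral_indicator hScm, integral_indicator hSdm]
  -- final algebra
  have hπc : 0 < (P Sc).toReal := ENNReal.toReal_pos hC.ne' (measure_ne_top P _)
  have hπd : 0 < (P Sd).toReal := ENNReal.toReal_pos hD.ne' (measure_ne_top P _)
  have hne : (P Sc).toReal - (P Sd).toReal ≠ 0 := hΔval ▸ hΔ0ne
  rw [hχ0, hδ1, hδ2, hΓval, hΔval]
  field_simp
  ring
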